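/- arXiv:2505.21232 — 2 statements merged into one kernel-verified Lean document; each statement's English description precedes it below -/
import Mathlib

section
/- Let A ∈ ℝ^{m×n}, b ∈ ℝ^m, c ∈ ℝ^n and let H be the (2n+m)×(2n+m) block matrix H = [[ccᵀ + AᵀA, -cbᵀ, 0], [-bcᵀ, bbᵀ + AAᵀ, A], [0, Aᵀ, I]]. Then rank(H) ≤ m + n + 1. -/
open Matrix BigOperators

noncomputable def meritH {m n : ℕ} (A : Matrix (Fin m) (Fin n) ℝ)
    (b : Fin m → ℝ) (c : Fin n → ℝ) :
    Matrix (Fin n ⊕ (Fin m ⊕ Fin n)) (Fin n ⊕ (Fin m ⊕ Fin n)) ℝ :=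
  Matrix.fromBlocks
    (vecMulVec c c + Aᵀ * A)
    (Matrix.fromCols (-(vecMulVec c b)) 0)
    (Matrix.fromRows (-(vecMulVec b c)) 0)
    (Matrix.fromBlocks (vecMulVec b b + A * Aᵀ) A Aᵀ 1)

noncomputable def meritN {m n : ℕ} (A : Matrix (Fin m) (Fin n) ℝ)
    (b : Fin m → ℝ) (c : Fin n → ℝ) :
    Matrix (Fin 1 ⊕ (Fin m ⊕ Fin n)) (Fin n ⊕ (Fin m ⊕ Fin n)) ℝ :=
  Matrix.fromRows
    (Matrix.of fun _ j => Sum.elim c (Sum.elim (fun i => -b i) (fun _ => 0)) j)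
    (Matrix.fromBlocks A 0 0 (Matrix.fromCols Aᵀ 1))

lemma meritH_eq {m n : ℕ} (A : Matrix (Fin m) (Fin n) ℝ)
    (b : Fin m → ℝ) (c : Fin n → ℝ) :
    meritH A b c = (meritN A b c)ᵀ * meritN A b c := by
  ext i j
  rcases i with i | i | i <;> rcases j with j | j | j <;>
    simp [meritH, meritN, mul_apply, Fintype.sum_sum_type, vecMulVec_apply,
      fromBlocks, fromRows_apply_inl, fromRows_apply_inr, fromCols_apply_inl, fromCols_apply_inr, one_apply, Finset.mul_sum,
      Finset.sum_mul, mul_comm] <;>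
    ring_nf <;> try rfl
  all_goals first | simp [Finset.sum_ite_eq, Finset.sum_ite_eq', mul_comm, eq_comm] | rfl

theorem meritH_rank_le {m n : ℕ} (A : Matrix (Fin m) (Fin n) ℝ)
    (b : Fin m → ℝ) (c : Fin n → ℝ) :
    (meritH A b c).rank ≤ m + n + 1 := by
  rw [meritH_eq]
  calc ((meritN A b c)ᵀ * meritN A b c).rank ≤ (meritN A b c).rank :=
        Matrix.rank_mul_le_right _ _
    _ ≤ Fintype.card (Fin 1 ⊕ (Fin m ⊕ Fin n)) := Matrix.rank_le_card_height _
    _ ≤ m + n + 1 := by simp; omega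
end

section
/- Let f₃(x,λ,s) = (1/2)(cᵀx - bᵀλ)² + (1/2)‖Ax - b‖² + (1/2)‖Aᵀλ + s - c‖² + (1/6)·Σ_j (max{-x_j,0}³ + max{-s_j,0}³). Its Hessian satisfies ‖∇²f₃(x,λ,s) - ∇²f₃(x',λ',s')‖₂ ≤ ‖(x,λ,s) - (x',λ',s')‖₂ for all points, i.e., the Hessian of f₃ is 1-Lipschitz in the spectral norm. -/
open Matrix BigOperators

noncomputable def hessF3 {m n : ℕ} (A : Matrix (Fin m) (Fin n) ℝ)
    (b : Fin m → ℝ) (c : Fin n → ℝ) (x : Fin n → ℝ) (s : Fin n → ℝ) :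
    Matrix (Fin n ⊕ (Fin m ⊕ Fin n)) (Fin n ⊕ (Fin m ⊕ Fin n)) ℝ :=
  meritH A b c +
    Matrix.diagonal
      (Sum.elim (fun j => max (-x j) 0)
        (Sum.elim (fun _ : Fin m => 0) (fun j => max (-s j) 0)))

lemma diag_clm_norm_le {ι : Type*} [Fintype ι] [DecidableEq ι]
    (g : ι → ℝ) (C : ℝ) (hC : 0 ≤ C) (hg : ∀ i, |g i| ≤ C) :
    ‖Matrix.toEuclideanCLM (𝕜 := ℝ) (Matrix.diagonal g)‖ ≤ C := by
  apply ContinuousLinearMap.opNorm_le_bound _ hC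
  intro v
  have hcomp : ∀ i, (Matrix.toEuclideanCLM (𝕜 := ℝ) (Matrix.diagonal g) v) i = g i * v i := by
    intro i
    have h := congrFun (Matrix.ofLp_toEuclideanCLM (Matrix.diagonal g) v) i
    simpa [Matrix.toLin'_apply, Matrix.mulVec_diagonal] using h
  rw [EuclideanSpace.norm_eq, EuclideanSpace.norm_eq]
  have hCsq : C * Real.sqrt (∑ i, ‖v i‖ ^ 2) = Real.sqrt (C ^ 2 * ∑ i, ‖v i‖ ^ 2) := by
    rw [Real.sqrt_mul (sq_nonneg C), Real.sqrt_sq hC]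
  rw [hCsq]
  apply Real.sqrt_le_sqrt
  rw [Finset.mul_sum]
  apply Finset.sum_le_sum
  intro i _
  rw [hcomp i]
  simp only [Real.norm_eq_abs]
  rw [abs_mul, mul_pow]
  gcongr
  exact hg i

theorem hessF3_lipschitz {m n : ℕ} (A : Matrix (Fin m) (Fin n) ℝ)
    (b : Fin m → ℝ) (c : Fin n → ℝ)
    (x x' : Fin n → ℝ) (lam lam' : Fin m → ℝ) (s s' : Fin n → ℝ) :
    ‖Matrix.toEuclideanCLM (𝕜 := ℝ) (hessF3 A b c x s) -
        Matrix.toEuclideanCLM (𝕜 := ℝ) (hessF3 A b c x' s')‖ ≤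
      Real.sqrt (∑ j, (x j - x' j) ^ 2 + ∑ i, (lam i - lam' i) ^ 2 +
        ∑ j, (s j - s' j) ^ 2) := by
  rw [← map_sub]
  have hdiff : hessF3 A b c x s - hessF3 A b c x' s' =
      Matrix.diagonal (Sum.elim (fun j => max (-x j) 0 - max (-x' j) 0)
        (Sum.elim (fun _ : Fin m => 0) (fun j => max (-s j) 0 - max (-s' j) 0))) := by
    unfold hessF3
    rw [add_sub_add_left_eq_sub, Matrix.diagonal_sub]
    apply congrArg Matrix.diagonal
    funext i
    cases i with
    | inl j => simp
    | inr j => cases j <;> simp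
  rw [hdiff]
  apply diag_clm_norm_le
  · positivity
  · intro i
    have key : ∀ a a' : ℝ, |max (-a) 0 - max (-a') 0| ≤ |a - a'| := by
      intro a a'
      have h := abs_max_sub_max_le_abs (-a) (-a') 0
      rw [neg_sub_neg] at h
      exact h.trans_eq (abs_sub_comm _ _)
    have sqle : ∀ (a a' : ℝ), |a - a'| ≤ Real.sqrt (∑ j, (x j - x' j) ^ 2 +
        ∑ i, (lam i - lam' i) ^ 2 + ∑ j, (s j - s' j) ^ 2) → True := fun _ _ _ => trivial
    cases i with
    | inl j =>
        refine (key (x j) (x' j)).trans ?_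
        rw [← Real.sqrt_sq_eq_abs]
        apply Real.sqrt_le_sqrt
        have h1 : (x j - x' j) ^ 2 ≤ ∑ j, (x j - x' j) ^ 2 :=
          Finset.single_le_sum (f := fun i => (x i - x' i) ^ 2) (fun i _ => sq_nonneg _) (Finset.mem_univ j)
        have h2 : (0:ℝ) ≤ ∑ i, (lam i - lam' i) ^ 2 := by positivity
        have h3 : (0:ℝ) ≤ ∑ j, (s j - s' j) ^ 2 := by positivity
        linarith
    | inr j => cases j with
      | inl i =>
          simp only [Sum.elim_inr, Sum.elim_inl, sub_zero, abs_zero]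
          positivity
      | inr j =>
          refine (key (s j) (s' j)).trans ?_
          rw [← Real.sqrt_sq_eq_abs]
          apply Real.sqrt_le_sqrt
          have h1 : (s j - s' j) ^ 2 ≤ ∑ j, (s j - s' j) ^ 2 :=
            Finset.single_le_sum (f := fun i => (s i - s' i) ^ 2) (fun i _ => sq_nonneg _) (Finset.mem_univ j)
          have h2 : (0:ℝ) ≤ ∑ i, (lam i - lam' i) ^ 2 := by positivity
          have h3 : (0:ℝ) ≤ ∑ j, (x j - x' j) ^ 2 := by positivity
          linarith
end
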